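/- If there exists an H-unitary matrix V ∈ ℂ^{n,n} with X = V X^{[*]}, then X admits an H-polar decomposition X = UA with UA = AU. -/

import Mathlib

open Polynomial Complex Matrix

noncomputable def csqrt (z : ℂ) : ℂ := Complex.exp (Complex.log z / 2)

lemma csqrt_ne_zero (z : ℂ) : csqrt z ≠ 0 := Complex.exp_ne_zero _

lemma csqrt_sq {z : ℂ} (hz : z ≠ 0) : csqrt z * csqrt z = z := by
  rw [csqrt, ← Complex.exp_add, add_halves, Complex.exp_log hz]

lemma log_conj_inv (z : ℂ) (hz : z ≠ 0) :
    Complex.log ((starRingEnd ℂ z)⁻¹) = -(starRingEnd ℂ (Complex.log z)) := by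
  have habs : ‖(starRingEnd ℂ z)⁻¹‖ = ‖z‖⁻¹ := by
    simp [map_inv₀]
  have hns : (0:ℝ) < (Complex.normSq z)⁻¹ := by
    have := Complex.normSq_pos.mpr hz; positivity
  have harg : ((starRingEnd ℂ z)⁻¹).arg = z.arg := by
    have h1 : ((Complex.normSq z)⁻¹ : ℝ) • z * (starRingEnd ℂ z) = 1 := by
      rw [Complex.real_smul, mul_assoc, Complex.mul_conj, ← Complex.ofReal_mul,
        inv_mul_cancel₀ (Complex.normSq_pos.mpr hz).ne']
      simp
    rw [inv_eq_of_mul_eq_one_left (by rw [mul_comm] at h1 ⊢; exact h1), Complex.real_smul,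
      Complex.arg_real_mul _ hns]
  apply Complex.ext
  · simp [Complex.log_re, habs, Real.log_inv]
  · simp [Complex.log_im, harg]

lemma csqrt_symm (z : ℂ) (hz : z ≠ 0) :
    csqrt ((starRingEnd ℂ z)⁻¹) = (starRingEnd ℂ (csqrt z))⁻¹ := by
  rw [csqrt, csqrt, ← Complex.exp_conj, ← Complex.exp_neg, log_conj_inv z hz]
  congr 1
  rw [map_div₀, map_ofNat]
  ring
open Polynomial

-- local Hensel lifting of square roots
lemma local_sqrt (l m : ℂ) (hm : m * m = l) (hm0 : m ≠ 0) (k : ℕ) :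
    ∃ q : ℂ[X], q.eval l = m ∧ (X - C l) ^ k ∣ (q * q - X) := by
  induction k with
  | zero => exact ⟨C m, by simp, by simp⟩
  | succ k ih =>
    obtain ⟨q, hq1, hq2⟩ := ih
    refine ⟨q - (q * q - X) * C (2 * m)⁻¹, by simp [hq1, hm], ?_⟩
    have key : (q - (q * q - X) * C (2 * m)⁻¹) * (q - (q * q - X) * C (2 * m)⁻¹) - X
        = (q * q - X) * ((1 - (2:ℂ[X]) * q * C (2*m)⁻¹) + (q*q - X) * C (2*m)⁻¹ * C (2*m)⁻¹) := by
      ring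
    rw [key, pow_succ]
    apply mul_dvd_mul hq2
    rw [Polynomial.dvd_iff_isRoot]
    simp only [Polynomial.IsRoot, eval_add, eval_sub, eval_mul, eval_one, eval_C, eval_X,
      eval_ofNat, hq1, hm]
    field_simp
    ring

-- CRT for polynomials over a finset
lemma poly_crt (s : Finset ℂ) (k : ℂ → ℕ) (q : ℂ → ℂ[X]) :
    ∃ p : ℂ[X], ∀ a ∈ s, (X - C a) ^ (k a) ∣ (p - q a) := by
  classical
  induction s using Finset.induction with
  | empty => exact ⟨0, by simp⟩
  | @insert a s ha ih =>
    obtain ⟨p₀, hp₀⟩ := ih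
    have hcop : IsCoprime ((X - C a) ^ (k a)) (∏ b ∈ s, (X - C b) ^ (k b)) := by
      apply IsCoprime.prod_right
      intro b hb
      exact (Polynomial.isCoprime_X_sub_C_of_isUnit_sub
        (sub_ne_zero_of_ne (fun h : a = b => ha (h ▸ hb))).isUnit).pow
    obtain ⟨u, v, huv⟩ := hcop
    set f := (X - C a) ^ (k a)
    set g := ∏ b ∈ s, (X - C b) ^ (k b)
    refine ⟨q a * v * g + p₀ * u * f, ?_⟩
    intro b hb
    rcases Finset.mem_insert.mp hb with rfl | hbs
    · have : q b * v * g + p₀ * u * f - q b = (p₀ - q b) * u * f + q b * (u * f + v * g - 1) := by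
        ring
      rw [this, huv]
      rw [sub_self, mul_zero, add_zero]; exact Dvd.dvd.mul_left (dvd_refl _) _
    · have : q a * v * g + p₀ * u * f - q b
          = (p₀ - q b) + ((q a - p₀) * v * g + p₀ * (u * f + v * g - 1)) := by ring
      rw [this, huv]
      apply dvd_add (hp₀ b hbs)
      simpa using Dvd.dvd.mul_left (Finset.dvd_prod_of_mem (fun b => (X - C b) ^ (k b)) hbs) _

variable {n : ℕ}

lemma aeval_conjT (M : Matrix (Fin n) (Fin n) ℂ) (p : ℂ[X]) :
    (Polynomial.aeval M p)ᴴ = Polynomial.aeval Mᴴ (p.map (starRingEnd ℂ)) := by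
  induction p using Polynomial.induction_on' with
  | add f g hf hg => simp [hf, hg]
  | monomial k c =>
    simp only [Polynomial.aeval_monomial, Polynomial.map_monomial]
    rw [← Algebra.smul_def, ← Algebra.smul_def, Matrix.conjTranspose_smul,
      Matrix.conjTranspose_pow]
    rfl

lemma conj_pow_lemma (B Hm A : Matrix (Fin n) (Fin n) ℂ) (h2 : Hm * B = 1) (k : ℕ) :
    (B * A * Hm) ^ k = B * A ^ k * Hm := by
  induction k with
  | zero => rw [pow_zero, pow_zero, mul_one, ← mul_eq_one_comm.mp h2]
  | succ k ih =>
    rw [pow_succ, pow_succ, ih, show B * A ^ k * Hm * (B * A * Hm)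
      = B * A ^ k * (Hm * B) * A * Hm by noncomm_ring, h2, mul_one]
    noncomm_ring

lemma aeval_conjugated (B Hm A : Matrix (Fin n) (Fin n) ℂ) (h2 : Hm * B = 1) (p : ℂ[X]) :
    Polynomial.aeval (B * A * Hm) p = B * (Polynomial.aeval A p) * Hm := by
  have h1 : B * Hm = 1 := mul_eq_one_comm.mp h2
  induction p using Polynomial.induction_on' with
  | add f g hf hg => rw [map_add, map_add, hf, hg]; noncomm_ring
  | monomial k c =>
    rw [Polynomial.aeval_monomial, Polynomial.aeval_monomial, conj_pow_lemma B Hm A h2,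
      ← Algebra.smul_def, ← Algebra.smul_def]
    simp [Matrix.smul_mul, Matrix.mul_smul]

lemma commute_aeval (A V : Matrix (Fin n) (Fin n) ℂ) (h : A * V = V * A) (p : ℂ[X]) :
    A * Polynomial.aeval V p = Polynomial.aeval V p * A := by
  induction p using Polynomial.induction_on' with
  | add f g hf hg => rw [map_add]; noncomm_ring [hf, hg]
  | monomial k c =>
    rw [Polynomial.aeval_monomial, ← Algebra.smul_def]
    have hc : A * V ^ k = V ^ k * A := (Commute.pow_right h k : _)
    simp [Matrix.mul_smul, Matrix.smul_mul, hc]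

theorem exists_good_sqrt {n : ℕ} (V B Bi : Matrix (Fin n) (Fin n) ℂ)
    (hVu : IsUnit V) (hBBi : Bi * B = 1) (hVinvB : B * Vᴴ * Bi = V⁻¹) :
    ∃ p : ℂ[X], (Polynomial.aeval V p) * (Polynomial.aeval V p) = V ∧
      (Polynomial.aeval V⁻¹ (p.map (starRingEnd ℂ))) * (Polynomial.aeval V p) = 1 := by
  classical
  have hVd : IsUnit V.det := (Matrix.isUnit_iff_isUnit_det V).mp hVu
  set m := minpoly ℂ V with hmdef
  have hint : IsIntegral ℂ V := IsIntegral.of_finite ℂ V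
  have hmonic : m.Monic := minpoly.monic hint
  have hm0 : m ≠ 0 := hmonic.ne_zero
  have haev : Polynomial.aeval V m = 0 := minpoly.aeval ℂ V
  -- constant coefficient nonzero
  have hc0 : m.coeff 0 ≠ 0 := by
    intro h
    obtain ⟨g, hg⟩ := Polynomial.X_dvd_iff.mpr h
    have hgV : Polynomial.aeval V g = 0 := by
      have h2 : V * Polynomial.aeval V g = 0 := by
        have := haev
        rw [hg, _root_.map_mul, Polynomial.aeval_X] at this
        exact this
      calc Polynomial.aeval V g = (V⁻¹ * V) * Polynomial.aeval V g := by
            rw [Matrix.nonsing_inv_mul V hVd, Matrix.one_mul]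
        _ = V⁻¹ * (V * Polynomial.aeval V g) := by rw [Matrix.mul_assoc]
        _ = 0 := by rw [h2, Matrix.mul_zero]
    have hgne : g ≠ 0 := by rintro rfl; rw [mul_zero] at hg; exact hm0 hg
    have h3 : m.natDegree ≤ g.natDegree := Polynomial.natDegree_le_of_dvd (minpoly.dvd ℂ V hgV) hgne
    have h4 : m.natDegree = 1 + g.natDegree := by
      rw [hg, Polynomial.natDegree_mul Polynomial.X_ne_zero hgne, Polynomial.natDegree_X]
    omega
  -- the inverse polynomial r
  set r : ℂ[X] := Polynomial.C (-(m.coeff 0)⁻¹) * m.divX with hrdef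
  have hXdivX : X * m.divX = m - Polynomial.C (m.coeff 0) := by
    have := Polynomial.X_mul_divX_add m; linear_combination this
  have hCC : (Polynomial.C (-(m.coeff 0)⁻¹) * Polynomial.C (m.coeff 0) : ℂ[X]) = -1 := by
    rw [← Polynomial.C_mul, neg_mul, inv_mul_cancel₀ hc0]; simp
  have hXr : X * r - 1 = Polynomial.C (-(m.coeff 0)⁻¹) * m := by
    rw [hrdef]
    calc X * (Polynomial.C (-(m.coeff 0)⁻¹) * m.divX) - 1
        = Polynomial.C (-(m.coeff 0)⁻¹) * (X * m.divX) - 1 := by ring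
      _ = Polynomial.C (-(m.coeff 0)⁻¹) * m
          - Polynomial.C (-(m.coeff 0)⁻¹) * Polynomial.C (m.coeff 0) - 1 := by rw [hXdivX]; ring
      _ = Polynomial.C (-(m.coeff 0)⁻¹) * m := by rw [hCC]; ring
  have haevr : V * Polynomial.aeval V r = 1 := by
    have h5 := congrArg (Polynomial.aeval V) hXr
    simp only [map_sub, _root_.map_mul, _root_.map_one, Polynomial.aeval_X, haev,
      mul_zero] at h5
    exact sub_eq_zero.mp h5
  have hVinv : Polynomial.aeval V r = V⁻¹ := (Matrix.inv_eq_right_inv haevr).symm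
  -- roots and factorization
  have hsplits : m.Splits := IsAlgClosed.splits m
  have hprodF : m = ∏ a ∈ m.roots.toFinset, (X - Polynomial.C a) ^ (m.roots.count a) := by
    conv_lhs => rw [hsplits.eq_prod_roots_of_monic hmonic]
    rw [Finset.prod_multiset_map_count]
  have hroot0 : ∀ a ∈ m.roots.toFinset, a ≠ 0 := by
    intro a ha h0
    have := (Polynomial.mem_roots hm0).mp (Multiset.mem_toFinset.mp ha)
    rw [h0] at this
    exact hc0 (by rwa [Polynomial.coeff_zero_eq_eval_zero])
  -- conj minpoly composed with r is divisible by m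
  have hmbar : m ∣ (m.map (starRingEnd ℂ)).comp r := by
    apply minpoly.dvd
    rw [Polynomial.aeval_comp, hVinv, ← hVinvB, aeval_conjugated B Bi Vᴴ hBBi, ← aeval_conjT, haev]
    simp
  -- local square roots with symmetric values
  have hex : ∀ a : ℂ, ∃ q : ℂ[X], a ∈ m.roots.toFinset →
      (q.eval a = csqrt a ∧ (X - Polynomial.C a) ^ (m.roots.count a) ∣ (q * q - X)) := by
    intro a
    by_cases ha : a ∈ m.roots.toFinset
    · obtain ⟨q, h1, h2⟩ := local_sqrt a (csqrt a) (csqrt_sq (hroot0 a ha)) (csqrt_ne_zero a)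
        (m.roots.count a)
      exact ⟨q, fun _ => ⟨h1, h2⟩⟩
    · exact ⟨0, fun h => absurd h ha⟩
  choose q hq using hex
  obtain ⟨p, hp⟩ := poly_crt m.roots.toFinset (fun a => m.roots.count a) q
  -- pairwise coprimality
  have hpair : (↑m.roots.toFinset : Set ℂ).Pairwise
      (Function.onFun IsCoprime fun a => (X - Polynomial.C a) ^ (m.roots.count a)) := by
    intro a _ b _ hab
    exact (Polynomial.isCoprime_X_sub_C_of_isUnit_sub (sub_ne_zero_of_ne hab).isUnit).pow
  -- p is a square root of X mod m
  have hpsq : m ∣ p * p - X := by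
    rw [hprodF]
    apply Finset.prod_dvd_of_coprime hpair
    intro a ha
    have h1 := hp a ha
    have h2 := (hq a ha).2
    have e : p * p - X = (p - q a) * (p + q a) + (q a * q a - X) := by ring
    rw [e]
    exact dvd_add (h1.mul_right _) h2
  have hpeval : ∀ a ∈ m.roots.toFinset, p.eval a = csqrt a := by
    intro a ha
    have hk : m.roots.count a ≠ 0 :=
      Nat.pos_iff_ne_zero.mp (Multiset.count_pos.mpr (Multiset.mem_toFinset.mp ha))
    have h2 : (X - Polynomial.C a) ∣ p - q a :=
      dvd_trans (dvd_pow_self _ hk) (hp a ha)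
    have h3 := Polynomial.dvd_iff_isRoot.mp h2
    have h4 : p.eval a - (q a).eval a = 0 := by simpa [Polynomial.IsRoot] using h3
    exact (sub_eq_zero.mp h4).trans (hq a ha).1
  -- the H-unitarity witness polynomial w
  set pbar : ℂ[X] := p.map (starRingEnd ℂ) with hpbar
  set w : ℂ[X] := pbar.comp r * p with hwdef
  obtain ⟨s₁, hs₁⟩ := hmbar
  have hwsq : m ∣ w * w - 1 := by
    obtain ⟨h, hh⟩ := hpsq
    have hpp : p * p = X + m * h := by linear_combination hh
    have hppbar : pbar * pbar = X + (m.map (starRingEnd ℂ)) * (h.map (starRingEnd ℂ)) := by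
      have h6 := congrArg (Polynomial.map (starRingEnd ℂ)) hpp
      simpa only [Polynomial.map_mul, Polynomial.map_add, Polynomial.map_X] using h6
    have e1 : w * w = (pbar * pbar).comp r * (p * p) := by
      rw [hwdef, Polynomial.mul_comp]; ring
    rw [e1, hppbar, Polynomial.add_comp, Polynomial.X_comp, Polynomial.mul_comp, hs₁, hpp]
    refine ⟨Polynomial.C (-(m.coeff 0)⁻¹) + r * h
        + s₁ * ((h.map (starRingEnd ℂ)).comp r) * X
        + m * s₁ * ((h.map (starRingEnd ℂ)).comp r) * h, ?_⟩
    linear_combination hXr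
  have hw1 : m ∣ w - 1 := by
    rw [hprodF]
    apply Finset.prod_dvd_of_coprime hpair
    intro a ha
    have ha0 : a ≠ 0 := hroot0 a ha
    have hdvd2 : (X - Polynomial.C a) ^ (m.roots.count a) ∣ (w - 1) * (w + 1) := by
      have e : (w - 1) * (w + 1) = w * w - 1 := by ring
      rw [e]
      have hfac : (X - Polynomial.C a) ^ (m.roots.count a) ∣ m := by
        conv_rhs => rw [hprodF]
        exact Finset.dvd_prod_of_mem _ ha
      exact dvd_trans hfac hwsq
    -- evaluate w at a
    have hra : r.eval a = a⁻¹ := by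
      have hma : m.eval a = 0 := (Polynomial.mem_roots hm0).mp (Multiset.mem_toFinset.mp ha)
      have h7 := congrArg (Polynomial.eval a) hXr
      simp only [Polynomial.eval_sub, Polynomial.eval_mul, Polynomial.eval_one,
        Polynomial.eval_X, Polynomial.eval_C, hma, mul_zero] at h7
      exact eq_inv_of_mul_eq_one_left (by linear_combination h7)
    set a' : ℂ := (starRingEnd ℂ a)⁻¹ with ha'def
    have hconja' : starRingEnd ℂ a' = a⁻¹ := by
      rw [ha'def, map_inv₀, Complex.conj_conj]
    have ha'mem : a' ∈ m.roots.toFinset := by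
      have h8 : ((m.map (starRingEnd ℂ)).comp r).eval a = 0 := by
        rw [hs₁]
        have hma : m.eval a = 0 := (Polynomial.mem_roots hm0).mp (Multiset.mem_toFinset.mp ha)
        simp [hma]
      rw [Polynomial.eval_comp, hra, ← hconja', Polynomial.eval_map,
        Polynomial.eval₂_at_apply] at h8
      have h9 : m.eval a' = 0 := by
        have := congrArg (starRingEnd ℂ) h8
        simpa using this
      exact Multiset.mem_toFinset.mpr ((Polynomial.mem_roots hm0).mpr h9)
    have hweval : w.eval a = 1 := by
      have e1 : w.eval a = pbar.eval (r.eval a) * p.eval a := by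
        rw [hwdef, Polynomial.eval_mul, Polynomial.eval_comp]
      have e2 : pbar.eval a⁻¹ = starRingEnd ℂ (p.eval a') := by
        rw [hpbar, ← hconja', Polynomial.eval_map, Polynomial.eval₂_at_apply]
      rw [e1, hra, e2, hpeval a' ha'mem, hpeval a ha, ha'def,
        csqrt_symm a ha0, map_inv₀, Complex.conj_conj,
        inv_mul_cancel₀ (csqrt_ne_zero a)]
    have hnotdvd : ¬ (X - Polynomial.C a) ∣ (w + 1) := by
      rw [Polynomial.dvd_iff_isRoot]
      simp [Polynomial.IsRoot, hweval]
    exact (Polynomial.prime_X_sub_C a).pow_dvd_of_dvd_mul_right _ hnotdvd hdvd2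
  -- conclude on matrices
  refine ⟨p, ?_, ?_⟩
  · obtain ⟨h, hh⟩ := hpsq
    have hpp : p * p = X + m * h := by linear_combination hh
    have h11 := congrArg (Polynomial.aeval V) hpp
    rw [_root_.map_mul, map_add, _root_.map_mul, Polynomial.aeval_X, haev, zero_mul,
      add_zero] at h11
    exact h11
  · obtain ⟨s₂, hs₂⟩ := hw1
    have hwV : w = 1 + m * s₂ := by linear_combination hs₂
    have h10 := congrArg (Polynomial.aeval V) hwV
    simp only [hwdef, _root_.map_mul, map_add, _root_.map_one, haev, zero_mul, add_zero,
      Polynomial.aeval_comp, hVinv] at h10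
    exact h10

/-- If X = V X^{[*]} for some H-unitary V, then X admits an H-polar decomposition with
commuting factors. -/
theorem hPolar_comm_of_hUnitary_times_adjoint {n : ℕ}
    (H X V : Matrix (Fin n) (Fin n) ℂ) (hH : H.IsHermitian) (hdet : IsUnit H.det)
    (hV : H⁻¹ * Vᴴ * H * V = 1) (hX : X = V * (H⁻¹ * Xᴴ * H)) :
    ∃ U A : Matrix (Fin n) (Fin n) ℂ,
      H⁻¹ * Uᴴ * H * U = 1 ∧ H⁻¹ * Aᴴ * H = A ∧ X = U * A ∧ U * A = A * U := by
  have h1 : H * H⁻¹ = 1 := Matrix.mul_nonsing_inv H hdet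
  have h2 : H⁻¹ * H = 1 := Matrix.nonsing_inv_mul H hdet
  have hHH : Hᴴ = H := hH
  have hHiH : (H⁻¹)ᴴ = H⁻¹ := by rw [Matrix.conjTranspose_nonsing_inv, hHH]
  have hVd : IsUnit V.det := Matrix.isUnit_det_of_left_inverse hV
  have hVu : IsUnit V := (Matrix.isUnit_iff_isUnit_det V).mpr hVd
  have hViV : V⁻¹ * V = 1 := Matrix.nonsing_inv_mul V hVd
  have hVVi : V * V⁻¹ = 1 := Matrix.mul_nonsing_inv V hVd
  have hVinvB : H⁻¹ * Vᴴ * H = V⁻¹ := (Matrix.inv_eq_left_inv hV).symm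
  -- the H-adjoint of X
  have hτX : H⁻¹ * Xᴴ * H = V⁻¹ * X := by
    conv_rhs => rw [hX, ← Matrix.mul_assoc, hViV, Matrix.one_mul]
  have hτX' : H⁻¹ * Xᴴ * H = X * V⁻¹ := by
    have hXH : Xᴴ = H * X * H⁻¹ * Vᴴ := by
      conv_lhs => rw [hX]
      rw [Matrix.conjTranspose_mul, Matrix.conjTranspose_mul, Matrix.conjTranspose_mul,
        hHH, hHiH, Matrix.conjTranspose_conjTranspose]
      simp only [Matrix.mul_assoc]
    rw [hXH]
    calc H⁻¹ * (H * X * H⁻¹ * Vᴴ) * H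
        = (H⁻¹ * H) * X * (H⁻¹ * Vᴴ * H) := by
          simp only [Matrix.mul_assoc]
      _ = X * V⁻¹ := by rw [h2, Matrix.one_mul, hVinvB]
  have hcV : V⁻¹ * X = X * V⁻¹ := by rw [← hτX, hτX']
  have hcomm : X * V = V * X := by
    calc X * V = V * (V⁻¹ * X) * V := by
          rw [← Matrix.mul_assoc, hVVi, Matrix.one_mul]
      _ = V * (X * V⁻¹) * V := by rw [hcV]
      _ = V * X * (V⁻¹ * V) := by simp only [Matrix.mul_assoc]
      _ = V * X := by rw [hViV, Matrix.mul_one]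
  -- square root
  obtain ⟨p, hU2, hUinv⟩ := exists_good_sqrt V H⁻¹ H hVu h1 hVinvB
  set U : Matrix (Fin n) (Fin n) ℂ := Polynomial.aeval V p with hUdef
  set Ub : Matrix (Fin n) (Fin n) ℂ := Polynomial.aeval V⁻¹ (p.map (starRingEnd ℂ)) with hUbdef
  have hτU : H⁻¹ * Uᴴ * H = Ub := by
    rw [hUdef, aeval_conjT, hUbdef, ← hVinvB, aeval_conjugated H⁻¹ H Vᴴ h1]
  have hUX : X * U = U * X := commute_aeval X V hcomm p
  have hVU : V * U = U * V := (commute_aeval V V rfl p).symm ▸ rfl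
  have hU1 : Ub * U = 1 := hUinv
  have hU1' : U * Ub = 1 := mul_eq_one_comm.mp hU1
  have hUbV : Ub * V = U := by
    calc Ub * V = Ub * (U * U) := by rw [hU2]
      _ = (Ub * U) * U := by rw [Matrix.mul_assoc]
      _ = U := by rw [hU1, Matrix.one_mul]
  have hUbalt : Ub = U * V⁻¹ := by
    calc Ub = Ub * (V * V⁻¹) := by rw [hVVi, Matrix.mul_one]
      _ = (Ub * V) * V⁻¹ := by rw [Matrix.mul_assoc]
      _ = U * V⁻¹ := by rw [hUbV]
  have hUVinv : V⁻¹ * U = U * V⁻¹ := by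
    calc V⁻¹ * U = V⁻¹ * U * (V * V⁻¹) := by rw [hVVi, Matrix.mul_one]
      _ = V⁻¹ * (U * V) * V⁻¹ := by simp only [Matrix.mul_assoc]
      _ = V⁻¹ * (V * U) * V⁻¹ := by rw [← hVU]
      _ = (V⁻¹ * V) * (U * V⁻¹) := by simp only [Matrix.mul_assoc]
      _ = U * V⁻¹ := by rw [hViV, Matrix.one_mul]
  have hτUb : H⁻¹ * Ubᴴ * H = U := by
    have : Ubᴴ = H * U * H⁻¹ := by
      rw [← hτU, Matrix.conjTranspose_mul, Matrix.conjTranspose_mul, hHH, hHiH,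
        Matrix.conjTranspose_conjTranspose, Matrix.mul_assoc]
    rw [this]
    calc H⁻¹ * (H * U * H⁻¹) * H = (H⁻¹ * H) * U * (H⁻¹ * H) := by simp only [Matrix.mul_assoc]
      _ = U := by rw [h2, Matrix.one_mul, Matrix.mul_one]
  refine ⟨U, Ub * X, ?_, ?_, ?_, ?_⟩
  · rw [hτU]; exact hU1
  · -- H-selfadjointness of A = Ub * X
    calc H⁻¹ * (Ub * X)ᴴ * H = H⁻¹ * Xᴴ * (Ubᴴ * H) := by
          rw [Matrix.conjTranspose_mul]; simp only [Matrix.mul_assoc]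
      _ = (H⁻¹ * Xᴴ * H) * (H⁻¹ * Ubᴴ * H) := by
          rw [← Matrix.mul_assoc, ← Matrix.mul_assoc]
          congr 1
          calc H⁻¹ * Xᴴ * Ubᴴ = H⁻¹ * Xᴴ * (H * H⁻¹) * Ubᴴ := by rw [h1, Matrix.mul_one]
            _ = H⁻¹ * Xᴴ * H * (H⁻¹ * Ubᴴ) := by simp only [Matrix.mul_assoc]
      _ = (V⁻¹ * X) * U := by rw [hτX, hτUb]
      _ = V⁻¹ * (X * U) := by rw [Matrix.mul_assoc]
      _ = V⁻¹ * (U * X) := by rw [hUX]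
      _ = (V⁻¹ * U) * X := by rw [Matrix.mul_assoc]
      _ = (U * V⁻¹) * X := by rw [hUVinv]
      _ = Ub * X := by rw [← hUbalt]
  · rw [← Matrix.mul_assoc, hU1', Matrix.one_mul]
  · calc U * (Ub * X) = (U * Ub) * X := by rw [Matrix.mul_assoc]
      _ = X := by rw [hU1', Matrix.one_mul]
      _ = (Ub * U) * X := by rw [hU1, Matrix.one_mul]
      _ = Ub * (U * X) := by rw [Matrix.mul_assoc]
      _ = Ub * (X * U) := by rw [hUX]
      _ = (Ub * X) * U := by rw [Matrix.mul_assoc]
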